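/- The identity (D₁ + D₂)(D₁ D₁ u) = R·(R''·(3R' - 2) + R·R''')·(D₁ u) holds on [α,1]; explicitly, R·(R·(R u')')' + R²·(R·(R u')')'' = R·(R''·(3R' - 2) + R·R''')·R·u'. -/

import Mathlib

open Set

theorem identity_D1_plus_D2_of_D1D1
    (α : ℝ) (hα : α ∈ Ioo (0 : ℝ) 1)
    (u : ℝ → ℝ) (hu : ContDiff ℝ 5 u)
    (hu' : ∀ ξ ∈ Icc α 1, 0 < deriv u ξ)
    (hu'' : ∀ ξ ∈ Icc α 1, deriv (deriv u) ξ < 0)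
    (R : ℝ → ℝ) (hR : ∀ ξ, R ξ = -(deriv u ξ) / deriv (deriv u) ξ) :
    ∀ ξ ∈ Icc α 1,
      R ξ * deriv (fun x => R x * deriv (fun w => R w * deriv u w) x) ξ
        + (R ξ) ^ 2
            * deriv (deriv (fun x => R x * deriv (fun w => R w * deriv u w) x)) ξ
      = R ξ * (deriv (deriv R) ξ * (3 * deriv R ξ - 2)
            + R ξ * deriv (deriv (deriv R)) ξ) * (R ξ * deriv u ξ) := by
  -- smoothness of derivatives of u
  have e5 : (5 : WithTop ℕ∞) = 4 + 1 := by norm_num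
  rw [e5] at hu
  have h4 : ContDiff ℝ 4 (deriv u) := (contDiff_succ_iff_deriv.mp hu).2.2
  have e4 : (4 : WithTop ℕ∞) = 3 + 1 := by norm_num
  rw [e4] at h4
  have h3 : ContDiff ℝ 3 (deriv (deriv u)) := (contDiff_succ_iff_deriv.mp h4).2.2
  have du' : Differentiable ℝ (deriv u) := h4.differentiable (by norm_num)
  have du'' : Differentiable ℝ (deriv (deriv u)) := h3.differentiable (by norm_num)
  -- the open set U
  set U : Set ℝ := (deriv (deriv u)) ⁻¹' {0}ᶜ with hUdef
  have hUopen : IsOpen U := (isOpen_compl_singleton).preimage du''.continuous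
  have hne : ∀ x ∈ U, deriv (deriv u) x ≠ 0 := fun x hx => hx
  have hsub : Icc α 1 ⊆ U := fun x hx => ne_of_lt (hu'' x hx)
  -- R is C³ on U
  have hRfun : R = fun x => -(deriv u x) / deriv (deriv u) x := funext hR
  have hR3 : ContDiffOn ℝ 3 R U := by
    rw [hRfun]
    exact ContDiffOn.div ((h4.of_le (by norm_num)).neg.contDiffOn)
      ((h3.of_le (by norm_num)).contDiffOn) hne
  have hR2 : ContDiffOn ℝ 2 (deriv R) U :=
    hR3.deriv_of_isOpen hUopen (by norm_num)
  have hR1 : ContDiffOn ℝ 1 (deriv (deriv R)) U :=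
    hR2.deriv_of_isOpen hUopen (by norm_num)
  have dR : ∀ x ∈ U, DifferentiableAt ℝ R x := fun x hx =>
    ((hR3.differentiableOn (by norm_num)).differentiableAt (hUopen.mem_nhds hx))
  have dR' : ∀ x ∈ U, DifferentiableAt ℝ (deriv R) x := fun x hx =>
    ((hR2.differentiableOn (by norm_num)).differentiableAt (hUopen.mem_nhds hx))
  have dR'' : ∀ x ∈ U, DifferentiableAt ℝ (deriv (deriv R)) x := fun x hx =>
    ((hR1.differentiableOn (by norm_num)).differentiableAt (hUopen.mem_nhds hx))
  -- key pointwise identity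
  have hkey : ∀ x ∈ U, R x * deriv (deriv u) x = -(deriv u x) := by
    intro x hx
    rw [hR, div_mul_cancel₀ _ (hne x hx)]
  -- Claim A
  have claimA : ∀ x ∈ U, deriv (fun w => R w * deriv u w) x
      = (deriv R x - 1) * deriv u x := by
    intro x hx
    rw [deriv_fun_mul (dR x hx) (du' x)]
    linear_combination hkey x hx
  -- Claim B
  have claimB : ∀ x ∈ U, deriv (fun x => R x * deriv (fun w => R w * deriv u w) x) x
      = deriv (deriv R) x * R x * deriv u x + (deriv R x - 1) ^ 2 * deriv u x := by
    intro x hx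
    have hev : (fun x => R x * deriv (fun w => R w * deriv u w) x)
        =ᶠ[nhds x] fun y => R y * ((deriv R y - 1) * deriv u y) := by
      filter_upwards [hUopen.mem_nhds hx] with y hy
      rw [claimA y hy]
    rw [hev.deriv_eq]
    have d1 : DifferentiableAt ℝ (fun y => deriv R y - 1) x :=
      (dR' x hx).sub_const 1
    rw [deriv_fun_mul (d := fun y => (deriv R y - 1) * deriv u y) (dR x hx) (d1.mul (du' x)), deriv_fun_mul d1 (du' x),
      deriv_sub_const]
    linear_combination (deriv R x - 1) * hkey x hx
  -- Claim C
  have claimC : ∀ x ∈ U,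
      deriv (deriv (fun x => R x * deriv (fun w => R w * deriv u w) x)) x
      = deriv (deriv (deriv R)) x * R x * deriv u x
        + deriv (deriv R) x * deriv R x * deriv u x
        + deriv (deriv R) x * R x * deriv (deriv u) x
        + 2 * (deriv R x - 1) * deriv (deriv R) x * deriv u x
        + (deriv R x - 1) ^ 2 * deriv (deriv u) x := by
    intro x hx
    have hev : (deriv (fun x => R x * deriv (fun w => R w * deriv u w) x))
        =ᶠ[nhds x] fun y => deriv (deriv R) y * R y * deriv u y
          + (deriv R y - 1) ^ 2 * deriv u y := by
      filter_upwards [hUopen.mem_nhds hx] with y hy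
      exact claimB y hy
    rw [hev.deriv_eq]
    have d1 : DifferentiableAt ℝ (fun y => deriv (deriv R) y * R y) x :=
      (dR'' x hx).mul (dR x hx)
    have d2 : DifferentiableAt ℝ (fun y => (deriv R y - 1) ^ 2) x :=
      ((dR' x hx).sub_const 1).pow 2
    rw [deriv_fun_add (f := fun y => deriv (deriv R) y * R y * deriv u y)
        (g := fun y => (deriv R y - 1) ^ 2 * deriv u y) (d1.mul (du' x)) (d2.mul (du' x)),
      deriv_fun_mul d1 (du' x), deriv_fun_mul (dR'' x hx) (dR x hx),
      deriv_fun_mul d2 (du' x), (show deriv (fun y => (deriv R y - 1) ^ 2) x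
          = 2 * (deriv R x - 1) * deriv (fun y => deriv R y - 1) x from
        (deriv_pow ((dR' x hx).sub_const 1) 2).trans (by norm_num)),
      deriv_sub_const]
    ring
  -- finish
  intro ξ hξ
  have hξU : ξ ∈ U := hsub hξ
  rw [claimB ξ hξU, claimC ξ hξU]
  linear_combination (R ξ ^ 2 * deriv (deriv R) ξ + R ξ * (deriv R ξ - 1) ^ 2) *
    hkey ξ hξU
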